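/- arXiv:2105.04240 — 2 statements merged into one kernel-verified Lean document; each statement's English description precedes it below -/
import Mathlib

section
/- Let A₁, …, A_k be n×n real symmetric positive semidefinite matrices with A₁ + ⋯ + A_k = Iₙ and rank(A₁) + ⋯ + rank(A_k) = n. Then each A_i is idempotent and A_iA_j = 0 for i ≠ j. -/
open Matrix FiniteDimensional

-- rank subadditivity for matrices
lemma matrix_rank_add_le {m : ℕ} (A B : Matrix (Fin m) (Fin m) ℝ) :
    (A + B).rank ≤ A.rank + B.rank := by
  have hle : LinearMap.range (A + B).mulVecLin ≤
      LinearMap.range A.mulVecLin ⊔ LinearMap.range B.mulVecLin := by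
    rintro x ⟨v, rfl⟩
    rw [Matrix.mulVecLin_add]
    exact Submodule.add_mem_sup ⟨v, rfl⟩ ⟨v, rfl⟩
  calc (A + B).rank ≤ Module.finrank ℝ
        ↥(LinearMap.range A.mulVecLin ⊔ LinearMap.range B.mulVecLin) :=
        Submodule.finrank_mono hle
    _ ≤ A.rank + B.rank := Submodule.finrank_add_le_finrank_add_finrank _ _

lemma matrix_rank_sum_le {m : ℕ} {ι : Type*} (s : Finset ι)
    (B : ι → Matrix (Fin m) (Fin m) ℝ) :
    (∑ j ∈ s, B j).rank ≤ ∑ j ∈ s, (B j).rank := by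
  classical
  induction s using Finset.induction with
  | empty => simp
  | insert _ _ h ih =>
    rw [Finset.sum_insert h, Finset.sum_insert h]
    exact (matrix_rank_add_le _ _).trans (by omega)

lemma idem_of_rank {m : ℕ} (A : Matrix (Fin m) (Fin m) ℝ)
    (h : A.rank + (1 - A).rank ≤ m) : A * A = A := by
  set p := LinearMap.range A.mulVecLin with hp
  set q := LinearMap.range (1 - A).mulVecLin with hq
  have hsup : p ⊔ q = ⊤ := by
    rw [eq_top_iff]
    intro x _
    have : x = A.mulVecLin x + (1 - A).mulVecLin x := by
      simp [Matrix.mulVecLin_apply, Matrix.sub_mulVec]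
    rw [this]
    exact Submodule.add_mem_sup ⟨x, rfl⟩ ⟨x, rfl⟩
  have hinf : p ⊓ q = ⊥ := by
    have h1 := Submodule.finrank_sup_add_finrank_inf_eq p q
    rw [hsup] at h1
    have h2 : Module.finrank ℝ (⊤ : Submodule ℝ (Fin m → ℝ)) = m := by
      rw [finrank_top]; simp
    have hpA : A.rank = Module.finrank ℝ p := rfl
    have hqA : (1 - A).rank = Module.finrank ℝ q := rfl
    have : Module.finrank ℝ ↥(p ⊓ q) = 0 := by omega
    exact Submodule.finrank_eq_zero.mp this
  have key : ∀ y ∈ p, A.mulVec y = y := by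
    intro y hy
    have h1 : y - A.mulVec y ∈ p := Submodule.sub_mem p hy (by
      obtain ⟨v, rfl⟩ := hy
      exact ⟨A.mulVecLin v, rfl⟩)
    have h2 : y - A.mulVec y ∈ q := ⟨y, by simp [Matrix.mulVecLin, Matrix.sub_mulVec]⟩
    have : y - A.mulVec y = 0 := by
      have := hinf ▸ Submodule.mem_inf.mpr ⟨h1, h2⟩
      simpa using this
    exact (sub_eq_zero.mp this).symm
  have hmv : ∀ x, (A * A).mulVec x = A.mulVec x := fun x => by
    rw [← Matrix.mulVec_mulVec]
    exact key (A.mulVec x) ⟨x, rfl⟩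
  exact Matrix.toLin'.injective (LinearMap.ext fun x => by
    simpa [Matrix.toLin'_apply] using hmv x)

lemma trace_nonneg_of_psd {m : ℕ} {M : Matrix (Fin m) (Fin m) ℝ}
    (hM : M.PosSemidef) : 0 ≤ M.trace := by
  rw [Matrix.trace]
  refine Finset.sum_nonneg fun i _ => ?_
  have := hM.dotProduct_mulVec_nonneg (Pi.single i 1)
  simpa [dotProduct, Matrix.mulVec, Pi.single_apply, Finset.sum_ite_eq,
    Matrix.diag] using this

lemma psd_trace_zero {m : ℕ} {M : Matrix (Fin m) (Fin m) ℝ}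
    (hM : M.PosSemidef) (h : M.trace = 0) : M = 0 := by
  open scoped MatrixOrder in
  obtain ⟨B, hB⟩ := CStarAlgebra.nonneg_iff_eq_star_mul_self.mp hM.nonneg
  rw [star_eq_conjTranspose] at hB; subst hB
  rw [Matrix.conjTranspose_mul_self_eq_zero]
  have htr : (Bᴴ * B).trace = ∑ i, ∑ j, (B j i) ^ 2 := by
    simp [Matrix.trace, Matrix.diag, Matrix.mul_apply, Matrix.conjTranspose_apply, sq]
  rw [htr] at h
  have := (Finset.sum_eq_zero_iff_of_nonneg (fun i _ =>
    Finset.sum_nonneg fun j _ => sq_nonneg (B j i))).mp h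
  ext j i
  have h2 := (Finset.sum_eq_zero_iff_of_nonneg (fun j _ => sq_nonneg (B j i))).mp
    (this i (Finset.mem_univ i)) j (Finset.mem_univ j)
  exact pow_eq_zero_iff (n := 2) (by norm_num) |>.mp h2

theorem cochran_matrix_core
    (n k : ℕ) (A : Fin k → Matrix (Fin n) (Fin n) ℝ)
    (hpsd : ∀ i, (A i).PosSemidef)
    (hsum : ∑ i, A i = (1 : Matrix (Fin n) (Fin n) ℝ))
    (hrank : ∑ i, (A i).rank = n) :
    (∀ i, A i * A i = A i) ∧ (∀ i j, i ≠ j → A i * A j = 0) := by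
  classical
  have hidem : ∀ i, A i * A i = A i := by
    intro i
    apply idem_of_rank
    have h1 : (1 : Matrix (Fin n) (Fin n) ℝ) - A i = ∑ j ∈ Finset.univ \ {i}, A j := by
      rw [← hsum, Finset.sum_sdiff_eq_sub (Finset.subset_univ _)]
      simp
    have h2 : (1 - A i).rank ≤ ∑ j ∈ Finset.univ \ {i}, (A j).rank := by
      rw [h1]; exact matrix_rank_sum_le _ _
    have h3 : ∑ j ∈ Finset.univ \ {i}, (A j).rank + (A i).rank = n := by
      have := Finset.sum_sdiff (f := fun j => (A j).rank)
        (Finset.subset_univ ({i} : Finset (Fin k)))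
      simpa [hrank] using this
    omega
  refine ⟨hidem, ?_⟩
  -- first show A j * A i = 0 for j ≠ i
  have key : ∀ i j, j ≠ i → A j * A i = 0 := by
    intro i j hji
    -- sum of sandwiches
    have hs : ∑ l ∈ Finset.univ \ {i}, (A i * A l * A i) = 0 := by
      have h1 : ∑ l, (A i * A l * A i) = A i := by
        rw [← Finset.sum_mul, ← Finset.mul_sum, hsum, mul_one, hidem i]
      have h2 : ∑ l ∈ Finset.univ \ {i}, (A i * A l * A i)
          = (∑ l, (A i * A l * A i)) - A i * A i * A i := by
        rw [Finset.sum_sdiff_eq_sub (Finset.subset_univ _)]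
        simp
      rw [h2, h1, hidem i, hidem i, sub_self]
    have hpsd' : ∀ l, (A i * A l * A i).PosSemidef := by
      intro l
      have := (hpsd l).mul_mul_conjTranspose_same (A i)
      rwa [(hpsd i).isHermitian.eq] at this
    -- traces
    have htr : ∑ l ∈ Finset.univ \ {i}, (A i * A l * A i).trace = 0 := by
      rw [← Matrix.trace_sum, hs, Matrix.trace_zero]
    have hz : ∀ l ∈ Finset.univ \ {i}, (A i * A l * A i).trace = 0 :=
      (Finset.sum_eq_zero_iff_of_nonneg (fun l _ => trace_nonneg_of_psd (hpsd' l))).mp htr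
    have hj0 : A i * A j * A i = 0 :=
      psd_trace_zero (hpsd' j) (hz j (by simp [hji]))
    open scoped MatrixOrder in
    obtain ⟨B, hB⟩ := CStarAlgebra.nonneg_iff_eq_star_mul_self.mp (hpsd j).nonneg
    rw [star_eq_conjTranspose] at hB
    have hBA : B * A i = 0 := by
      have : (B * A i)ᴴ * (B * A i) = 0 := by
        have : (A i)ᴴ * (Bᴴ * B) * A i = 0 := by
          rw [(hpsd i).isHermitian.eq, ← hB]; exact hj0
        calc (B * A i)ᴴ * (B * A i) = (A i)ᴴ * Bᴴ * (B * A i) := by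
              rw [Matrix.conjTranspose_mul]
          _ = (A i)ᴴ * (Bᴴ * B) * A i := by noncomm_ring
          _ = 0 := this
      exact Matrix.conjTranspose_mul_self_eq_zero.mp this
    rw [hB, mul_assoc, hBA, mul_zero]
  intro i j hij
  exact key j i hij
end

section
/- Let X ∈ ℝ^{n×p} have full column rank and Σ be symmetric positive definite. The OLS estimator (XᵀX)⁻¹Xᵀy equals the GLS estimator (XᵀΣ⁻¹X)⁻¹XᵀΣ⁻¹y for all y ∈ ℝⁿ if and only if the column space of Σ⁻¹X equals the column space of X. -/
open Matrix

lemma aux_inj (n p : ℕ) (X : Matrix (Fin n) (Fin p) ℝ) (hrank : X.rank = p) :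
    Function.Injective X.mulVecLin := by
  rw [← LinearMap.ker_eq_bot, ← Submodule.finrank_eq_zero]
  have h := LinearMap.finrank_range_add_finrank_ker X.mulVecLin
  rw [Matrix.rank] at hrank
  rw [hrank, Module.finrank_fintype_fun_eq_card, Fintype.card_fin] at h
  omega

-- posdef of Xᵀ A X
lemma aux_posdef (n p : ℕ) (X : Matrix (Fin n) (Fin p) ℝ)
    (hX : Function.Injective X.mulVecLin)
    (A : Matrix (Fin n) (Fin n) ℝ) (hA : A.PosDef) : (Xᵀ * A * X).PosDef := by
  rw [posDef_iff_dotProduct_mulVec]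
  constructor
  · have hAH : Aᵀ = A := hA.isHermitian
    show (Xᵀ * A * X)ᴴ = _
    simp only [conjTranspose_eq_transpose_of_trivial, transpose_mul, transpose_transpose,
      hAH, Matrix.mul_assoc]
  · intro x hx
    have hXx : X *ᵥ x ≠ 0 := by
      intro h
      apply hx
      have := hX (a₁ := x) (a₂ := 0) (by simpa using h)
      simpa using this
    have key : star x ⬝ᵥ ((Xᵀ * A * X) *ᵥ x) = star (X *ᵥ x) ⬝ᵥ (A *ᵥ (X *ᵥ x)) := by
      simp only [star_trivial, ← mulVec_mulVec, dotProduct_mulVec, vecMul_transpose]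
    rw [key]
    exact hA.dotProduct_mulVec_pos hXx

theorem ols_eq_gls_iff
    (n p : ℕ) (X : Matrix (Fin n) (Fin p) ℝ) (hrank : X.rank = p)
    (S : Matrix (Fin n) (Fin n) ℝ) (hS : S.PosDef) :
    (∀ y : Fin n → ℝ,
      (Xᵀ * X)⁻¹ *ᵥ (Xᵀ *ᵥ y) = (Xᵀ * S⁻¹ * X)⁻¹ *ᵥ ((Xᵀ * S⁻¹) *ᵥ y)) ↔
    LinearMap.range (S⁻¹ * X).mulVecLin = LinearMap.range X.mulVecLin := by
  have hX : Function.Injective X.mulVecLin := aux_inj n p X hrank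
  have hSi : (S⁻¹).PosDef := hS.inv
  have hA : (Xᵀ * X).PosDef := by
    have := aux_posdef n p X hX 1 Matrix.PosDef.one
    simpa using this
  have hB : (Xᵀ * S⁻¹ * X).PosDef := aux_posdef n p X hX S⁻¹ hSi
  have hAd : IsUnit (Xᵀ * X).det := (isUnit_iff_isUnit_det _).mp hA.isUnit
  have hBd : IsUnit (Xᵀ * S⁻¹ * X).det := (isUnit_iff_isUnit_det _).mp hB.isUnit
  have hAsymm : (Xᵀ * X)ᵀ = Xᵀ * X := by
    have h : (Xᵀ * X)ᴴ = Xᵀ * X := hA.isHermitian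
    rwa [conjTranspose_eq_transpose_of_trivial] at h
  have hBsymm : (Xᵀ * S⁻¹ * X)ᵀ = Xᵀ * S⁻¹ * X := by
    have h : (Xᵀ * S⁻¹ * X)ᴴ = Xᵀ * S⁻¹ * X := hB.isHermitian
    rwa [conjTranspose_eq_transpose_of_trivial] at h
  have hSsymm : (S⁻¹)ᵀ = S⁻¹ := by
    have h : (S⁻¹)ᴴ = S⁻¹ := hSi.isHermitian
    rwa [conjTranspose_eq_transpose_of_trivial] at h
  -- the pointwise condition is equivalent to the matrix identity
  have hmatiff : (∀ y : Fin n → ℝ,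
      (Xᵀ * X)⁻¹ *ᵥ (Xᵀ *ᵥ y) = (Xᵀ * S⁻¹ * X)⁻¹ *ᵥ ((Xᵀ * S⁻¹) *ᵥ y)) ↔
      (Xᵀ * X)⁻¹ * Xᵀ = (Xᵀ * S⁻¹ * X)⁻¹ * (Xᵀ * S⁻¹) := by
    constructor
    · intro h
      ext i j
      have := congrFun (h (Pi.single j 1)) i
      rwa [mulVec_mulVec, mulVec_mulVec, mulVec_single_one, mulVec_single_one,
        col_apply, col_apply] at this
    · intro h y
      rw [mulVec_mulVec, mulVec_mulVec, h]
  rw [hmatiff]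
  constructor
  · intro h
    -- derive S⁻¹ * X = X * ((Xᵀ * X)⁻¹ * (Xᵀ * S⁻¹ * X))
    have h1 : (Xᵀ * S⁻¹ * X) * ((Xᵀ * X)⁻¹ * Xᵀ) = Xᵀ * S⁻¹ := by
      rw [h, ← Matrix.mul_assoc, mul_nonsing_inv _ hBd, Matrix.one_mul]
    have h2 : S⁻¹ * X = X * ((Xᵀ * X)⁻¹ * (Xᵀ * S⁻¹ * X)) := by
      calc S⁻¹ * X = (Xᵀ * S⁻¹)ᵀ := by rw [transpose_mul, transpose_transpose, hSsymm]
        _ = (Xᵀ * S⁻¹ * X * ((Xᵀ * X)⁻¹ * Xᵀ))ᵀ := by rw [h1]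
        _ = X * ((Xᵀ * X)⁻¹ * (Xᵀ * S⁻¹ * X)) := by
            rw [transpose_mul, transpose_mul, transpose_nonsing_inv, transpose_transpose,
              hAsymm, hBsymm, Matrix.mul_assoc]
    have hDd : IsUnit ((Xᵀ * X)⁻¹ * (Xᵀ * S⁻¹ * X)).det := by
      rw [Matrix.det_mul]
      exact ((isUnit_nonsing_inv_det _ hAd)).mul hBd
    rw [h2, Matrix.mulVecLin_mul]
    apply LinearMap.range_comp_of_range_eq_top
    rw [LinearMap.range_eq_top]
    exact mulVec_surjective_iff_isUnit.mpr ((isUnit_iff_isUnit_det _).mpr hDd)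
  · intro hr
    have hcol : ∀ j, ∃ c, X *ᵥ c = (S⁻¹ * X) *ᵥ Pi.single j 1 := by
      intro j
      have : (S⁻¹ * X) *ᵥ Pi.single j 1 ∈ LinearMap.range X.mulVecLin := by
        rw [← hr]; exact ⟨Pi.single j 1, rfl⟩
      exact this
    choose c hc using hcol
    set C : Matrix (Fin p) (Fin p) ℝ := Matrix.of (fun i j => c j i) with hCdef
    have hSX : S⁻¹ * X = X * C := by
      ext i j
      have := congrFun (hc j) i
      rw [mulVec_single_one, col_apply] at this
      rw [← this]
      simp [Matrix.mul_apply, mulVec, dotProduct, hCdef]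
    have hBC : Xᵀ * S⁻¹ * X = (Xᵀ * X) * C := by
      rw [Matrix.mul_assoc, hSX, ← Matrix.mul_assoc]
    have hC : C = (Xᵀ * X)⁻¹ * (Xᵀ * S⁻¹ * X) := by
      rw [hBC, ← Matrix.mul_assoc, nonsing_inv_mul _ hAd, Matrix.one_mul]
    -- now Xᵀ * S⁻¹ = Cᵀ * Xᵀ = (Xᵀ * S⁻¹ * X) * (Xᵀ * X)⁻¹ * Xᵀ
    have hXS : Xᵀ * S⁻¹ = (Xᵀ * S⁻¹ * X) * ((Xᵀ * X)⁻¹ * Xᵀ) := by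
      calc Xᵀ * S⁻¹ = (S⁻¹ * X)ᵀ := by rw [transpose_mul, hSsymm]
        _ = (X * C)ᵀ := by rw [hSX]
        _ = Cᵀ * Xᵀ := transpose_mul _ _
        _ = (Xᵀ * S⁻¹ * X) * ((Xᵀ * X)⁻¹ * Xᵀ) := by
            rw [hC, transpose_mul, hBsymm, transpose_nonsing_inv, hAsymm, Matrix.mul_assoc]
    calc (Xᵀ * X)⁻¹ * Xᵀ
        = ((Xᵀ * S⁻¹ * X)⁻¹ * (Xᵀ * S⁻¹ * X)) * ((Xᵀ * X)⁻¹ * Xᵀ) := by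
          rw [nonsing_inv_mul _ hBd, Matrix.one_mul]
      _ = (Xᵀ * S⁻¹ * X)⁻¹ * ((Xᵀ * S⁻¹ * X) * ((Xᵀ * X)⁻¹ * Xᵀ)) := Matrix.mul_assoc _ _ _
      _ = (Xᵀ * S⁻¹ * X)⁻¹ * (Xᵀ * S⁻¹) := by rw [← hXS]
end
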